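/- Let n ≥ 1, ℓ = n, let H: R^{2n} → R satisfy (H0)–(H2), and let M > M*. Define the vector field ξ on R^{2n}_* := R^{2n} \ ({0}×R^ℓ) by ξ(p,q) := (p,0). Then ξ is a symplectic dilation of H^{-1}(M): (a) ⟨J·Dξ(x)u, v⟩ + ⟨Ju, Dξ(x)v⟩ = ⟨Ju, v⟩ for all x ∈ R^{2n}_* and u,v ∈ R^{2n} (the coordinate expression of L_ξω = ω for the standard symplectic form), and (b) ∇H(x)·ξ(x) > 0 for every x ∈ H^{-1}(M), so ξ is transverse to H^{-1}(M). In particular H^{-1}(M) is of contact type. -/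

import Mathlib

noncomputable section
open scoped RealInnerProductSpace

/-- `ℝ^{2n}` as a Euclidean space. -/
abbrev E2 (n : ℕ) := EuclideanSpace ℝ (Fin (2*n))

/-- The standard symplectic matrix `J` on `ℝ^{2n} = ℝ^n × ℝ^n`, `J(u,v) = (-v,u)`. -/
def Jsymp (n : ℕ) (x : E2 n) : E2 n :=
  WithLp.toLp 2 fun (i : Fin (2*n)) => if h : (i : ℕ) < n then -x ⟨(i : ℕ) + n, by omega⟩
           else x ⟨(i : ℕ) - n, by have := i.isLt; omega⟩

/-- The vector `(0,m) ∈ ℝ^{2n-ℓ} × ℝ^ℓ` whose `q`-part (last `ℓ` coordinates) is the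
integer vector `m ∈ ℤ^ℓ` and whose `p`-part vanishes. -/
def qVec (n l : ℕ) (m : Fin l → ℤ) : E2 n :=
  WithLp.toLp 2 fun (i : Fin (2*n)) => if h : 2*n - l ≤ (i : ℕ) then
      (m ⟨(i : ℕ) - (2*n - l), by have := i.isLt; omega⟩ : ℝ) else 0

/-- The vector `(p,0)`: projection of `x = (p,q)` onto the first `2n-ℓ` coordinates. -/
def projP (n l : ℕ) (x : E2 n) : E2 n := WithLp.toLp 2 fun (i : Fin (2*n)) => if (i : ℕ) < 2*n - l then x i else 0

/-- `|p|` : the Euclidean norm of the first `2n-ℓ` coordinates of `x = (p,q)`. -/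
def pnorm (n l : ℕ) (x : E2 n) : ℝ := ‖projP n l x‖

/-- projP as a continuous linear map. -/
def projL (n l : ℕ) : E2 n →L[ℝ] E2 n :=
  LinearMap.toContinuousLinearMap
  { toFun := projP n l
    map_add' := by
      intro x y; ext i
      by_cases h : (i:ℕ) < 2*n - l <;> simp [projP, h]
    map_smul' := by
      intro c x; ext i
      by_cases h : (i:ℕ) < 2*n - l <;> simp [projP, h] }

lemma projL_apply (n l : ℕ) (x : E2 n) : projL n l x = projP n l x := rfl

lemma fderiv_projP (n l : ℕ) (x : E2 n) :
    fderiv ℝ (fun y => projP n l y) x = projL n l := by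
  have : (fun y => projP n l y) = ⇑(projL n l) := rfl
  rw [this, ContinuousLinearMap.fderiv]

lemma key_identity (n : ℕ) (x u v : E2 n) :
    ⟪Jsymp n (projP n n u), v⟫ + ⟪Jsymp n u, projP n n v⟫ = ⟪Jsymp n u, v⟫ := by
  have hnn : 2*n - n = n := by omega
  simp only [PiLp.inner_apply, RCLike.inner_apply, conj_trivial]
  rw [← Finset.sum_add_distrib]
  apply Finset.sum_congr rfl
  intro i _
  have hi := i.isLt
  rcases lt_or_ge (i : ℕ) n with h | h
  · have h1 : ¬ ((i:ℕ) + n < 2*n - n) := by omega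
    have h2 : (i:ℕ) < 2*n - n := by omega
    simp only [Jsymp, projP, PiLp.toLp_apply, dif_pos h, if_pos h2, if_neg h1]
    ring
  · have h1 : (i:ℕ) - n < 2*n - n := by omega
    have h2 : ¬ ((i:ℕ) < 2*n - n) := by omega
    simp only [Jsymp, projP, PiLp.toLp_apply, dif_neg (not_lt.mpr h), if_pos h1, if_neg h2]
    ring

lemma pnorm_continuous (n l : ℕ) : Continuous (pnorm n l) := by
  have : pnorm n l = fun x => ‖projL n l x‖ := rfl
  rw [this]
  exact (projL n l).continuous.norm

/-- Proposition 2.6: for `ℓ = n` and `M > M*`, the vector field `ξ(p,q) = (p,0)` is a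
symplectic dilation of `H⁻¹(M)`, which is transverse to it; in particular `H⁻¹(M)` is of
contact type. -/
theorem radial_field_is_symplectic_dilation
    (n : ℕ) (hn : 1 ≤ n) (H : E2 n → ℝ) (μ r : ℝ)
    (hH0 : ContDiff ℝ 2 H)
    (hH1 : ∀ (x : E2 n) (m : Fin n → ℤ), H (x + qVec n n m) = H x)
    (hμ : 0 < μ) (hr : 0 < r)
    (hH2 : ∀ x : E2 n, r ≤ pnorm n n x →
      0 < μ * H x ∧ μ * H x ≤ ⟪gradient H x, projP n n x⟫)
    (M : ℝ) (hM : ∀ x : E2 n, pnorm n n x ≤ r → H x < M) :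
    (∀ x : E2 n, projP n n x ≠ 0 → ∀ u v : E2 n,
      ⟪Jsymp n (fderiv ℝ (fun y => projP n n y) x u), v⟫ +
        ⟪Jsymp n u, fderiv ℝ (fun y => projP n n y) x v⟫ = ⟪Jsymp n u, v⟫) ∧
    (∀ x : E2 n, H x = M → 0 < ⟪gradient H x, projP n n x⟫) ∧
    ∃ (U : Set (E2 n)) (ξ : E2 n → E2 n), IsOpen U ∧ {x : E2 n | H x = M} ⊆ U ∧
      ContDiffOn ℝ 1 ξ U ∧
      (∀ x ∈ U, ∀ u v : E2 n,
        ⟪Jsymp n (fderiv ℝ ξ x u), v⟫ + ⟪Jsymp n u, fderiv ℝ ξ x v⟫ = ⟪Jsymp n u, v⟫) ∧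
      (∀ x : E2 n, H x = M → ⟪gradient H x, ξ x⟫ ≠ 0) := by
  have hpos : ∀ x : E2 n, H x = M → 0 < ⟪gradient H x, projP n n x⟫ := by
    intro x hx
    have hge : r ≤ pnorm n n x := by
      by_contra h
      push_neg at h
      exact absurd hx (hM x h.le).ne
    have h2 := hH2 x hge
    calc (0:ℝ) < μ * H x := h2.1
      _ ≤ _ := h2.2
  refine ⟨?_, hpos, ?_⟩
  · intro x _ u v
    rw [fderiv_projP]
    exact key_identity n x u v
  · refine ⟨{x | r < pnorm n n x}, fun x => projP n n x, ?_, ?_, ?_, ?_, ?_⟩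
    · exact isOpen_lt continuous_const (pnorm_continuous n n)
    · intro x hx
      simp only [Set.mem_setOf_eq] at hx ⊢
      by_contra h
      push_neg at h
      exact absurd hx (hM x h).ne
    · exact ((projL n n).contDiff (n := 1)).contDiffOn
    · intro x _ u v
      rw [fderiv_projP]
      exact key_identity n x u v
    · intro x hx
      exact (hpos x hx).ne'
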